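/- Let a, k, r ∈ ℕ with 1 ≤ r ≤ k. Then the power series 𝒜_{a,k,r}(q) belongs to the ℚ-subalgebra of ℚ⟦q⟧ generated by the Eisenstein q-series 𝒢_j(q) := Σ_{n≥1} σ_{j−1}(n) q^n for 1 ≤ j ≤ ak, where σ_m(n) := Σ_{d∣n} d^m. Moreover it can be written as a ℚ-linear combination of monomials 𝒢_{j₁}⋯𝒢_{j_t} (including the empty monomial 1) with j₁ + ⋯ + j_t ≤ ak. -/

import Mathlib

open PowerSeries Finset
open scoped Classical

noncomputable section

/-- `(1 - q^n)^(-k)` in `ℚ⟦q⟧`, for `k : ℤ` (for negative `k` this is the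
power `(1 - q^n)^{|k|}`). -/
def dFac (n : ℕ) (k : ℤ) : PowerSeries ℚ :=
  if 0 ≤ k then ((1 - (X : PowerSeries ℚ) ^ n)⁻¹) ^ k.toNat
  else (1 - (X : PowerSeries ℚ) ^ n) ^ (-k).toNat

/-- Strictly increasing `a`-tuples `1 ≤ n₁ < n₂ < ⋯ < n_a ≤ N`. -/
def strictTuples (a N : ℕ) : Finset (Fin a → ℕ) :=
  (Fintype.piFinset fun _ : Fin a => Finset.Icc 1 N).filter fun f => StrictMono f

/-- The coefficient `c_{a,k,r}(N)` of `q^N` in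
`𝒜_{a,k,r}(q) = Σ_{1≤n₁<⋯<n_a} q^{r(n₁+⋯+n_a)} / ∏_j (1-q^{n_j})^k`.
Since `r ≥ 1`, tuples containing an entry `> N` contribute `0` to the coefficient of `q^N`,
so the (q-adically convergent) infinite sum can be truncated to entries in `[1, N]`. -/
def Acoeff (a : ℕ) (k : ℤ) (r : ℕ) (N : ℕ) : ℚ :=
  ∑ f ∈ strictTuples a N,
    PowerSeries.coeff N ((X : PowerSeries ℚ) ^ (r * ∑ j, f j) * ∏ j, dFac (f j) k)

/-- The Eisenstein `q`-series `𝒢_j(q) = Σ_{n≥1} σ_{j-1}(n) qⁿ ∈ ℚ⟦q⟧`, where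
`σ_m(n) = Σ_{d ∣ n} d^m` (the coefficient at `n = 0` is `0` since `Nat.divisors 0 = ∅`). -/
def Gq (j : ℕ) : PowerSeries ℚ :=
  PowerSeries.mk fun n => ∑ d ∈ n.divisors, (d : ℚ) ^ (j - 1)

/-- The power series `𝒜_{a,k,r}(q) ∈ ℚ⟦q⟧`. -/
def Aser (a : ℕ) (k : ℤ) (r : ℕ) : PowerSeries ℚ := PowerSeries.mk (Acoeff a k r)

/-! ### auxiliary -/

lemma dFac_coe (n j : ℕ) : dFac n (j : ℤ) = ((1 - (X : PowerSeries ℚ) ^ n)⁻¹) ^ j := by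
  simp [dFac]

lemma dFac_pow (n j i : ℕ) : dFac n (j : ℤ) ^ i = dFac n ((j * i : ℕ) : ℤ) := by
  rw [dFac_coe, dFac_coe, ← pow_mul]

/-- the basic single factor `q^{r n} / (1-q^n)^k`. -/
def uu (k r n : ℕ) : PowerSeries ℚ := (X : PowerSeries ℚ) ^ (r * n) * dFac n (k : ℤ)

lemma uu_pow (k r n i : ℕ) : uu k r n ^ i = uu (k * i) (r * i) n := by
  rw [uu, uu, mul_pow, ← pow_mul, dFac_pow]
  ring_nf

lemma one_sub_X_pow_unit (n : ℕ) (hn : 1 ≤ n) :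
    (1 - (X : PowerSeries ℚ) ^ n) * (1 - (X : PowerSeries ℚ) ^ n)⁻¹ = 1 := by
  apply PowerSeries.mul_inv_cancel
  simp [map_pow, zero_pow (by omega : n ≠ 0)]

lemma pow_mul_inv_pow (n s k : ℕ) (hn : 1 ≤ n) (hsk : s ≤ k) :
    (1 - (X : PowerSeries ℚ) ^ n) ^ (k - s) * ((1 - (X : PowerSeries ℚ) ^ n)⁻¹) ^ k
      = ((1 - (X : PowerSeries ℚ) ^ n)⁻¹) ^ s := by
  obtain ⟨t, rfl⟩ : ∃ t, k = t + s := ⟨k - s, by omega⟩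
  rw [Nat.add_sub_cancel, pow_add, ← mul_assoc, ← mul_pow, one_sub_X_pow_unit n hn, one_pow,
    one_mul]

/-! ### the subspace E W -/

def Egen (W : ℕ) : Set (PowerSeries ℚ) :=
  {s | ∃ m : Multiset ℕ, (∀ j ∈ m, 1 ≤ j) ∧ m.sum ≤ W ∧ s = (m.map Gq).prod}

def E (W : ℕ) : Submodule ℚ (PowerSeries ℚ) := Submodule.span ℚ (Egen W)

lemma E_mono {W W' : ℕ} (h : W ≤ W') : E W ≤ E W' := by
  apply Submodule.span_mono
  rintro s ⟨m, h1, h2, rfl⟩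
  exact ⟨m, h1, h2.trans h, rfl⟩

lemma one_mem_E (W : ℕ) : (1 : PowerSeries ℚ) ∈ E W :=
  Submodule.subset_span ⟨0, by simp, by simp, by simp⟩

lemma Gq_mem_E {j W : ℕ} (hj : 1 ≤ j) (hjW : j ≤ W) : Gq j ∈ E W :=
  Submodule.subset_span ⟨{j}, by simpa using hj, by simpa using hjW, by simp⟩

lemma mul_mem_E {W1 W2 : ℕ} {x y : PowerSeries ℚ} (hx : x ∈ E W1) (hy : y ∈ E W2) :
    x * y ∈ E (W1 + W2) := by
  induction hx using Submodule.span_induction with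
  | mem x hxg =>
    induction hy using Submodule.span_induction with
    | mem y hyg =>
      obtain ⟨m1, hm1, hs1, rfl⟩ := hxg
      obtain ⟨m2, hm2, hs2, rfl⟩ := hyg
      apply Submodule.subset_span
      refine ⟨m1 + m2, ?_, ?_, ?_⟩
      · intro j hj; rcases Multiset.mem_add.mp hj with h | h
        · exact hm1 j h
        · exact hm2 j h
      · rw [Multiset.sum_add]; omega
      · rw [Multiset.map_add, Multiset.prod_add]
    | zero => rw [mul_zero]; exact zero_mem _
    | add y z _ _ hy hz => rw [mul_add]; exact add_mem hy hz
    | smul c y _ hy => rw [mul_smul_comm]; exact Submodule.smul_mem _ _ hy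
  | zero => rw [zero_mul]; exact zero_mem _
  | add x z _ _ hx hz => rw [add_mul]; exact add_mem hx hz
  | smul c x _ hx => rw [smul_mul_assoc]; exact Submodule.smul_mem _ _ hx

/-! ### truncated sums -/

def Strunc (a k r M : ℕ) : PowerSeries ℚ :=
  ∑ f ∈ strictTuples a M, ∏ j, uu k r (f j)

lemma mem_strictTuples {a N : ℕ} {f : Fin a → ℕ} :
    f ∈ strictTuples a N ↔ (∀ j, 1 ≤ f j ∧ f j ≤ N) ∧ StrictMono f := by
  simp [strictTuples, Fintype.mem_piFinset, forall_and]

lemma prod_uu {a : ℕ} (k r : ℕ) (f : Fin a → ℕ) :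
    ∏ j, uu k r (f j) = (X : PowerSeries ℚ) ^ (r * ∑ j, f j) * ∏ j, dFac (f j) (k : ℤ) := by
  simp only [uu]
  rw [Finset.prod_mul_distrib, Finset.prod_pow_eq_pow_sum, ← Finset.mul_sum]

lemma Acoeff_eq_coeff_Strunc (a k r : ℕ) (N : ℕ) :
    Acoeff a (k : ℤ) r N = PowerSeries.coeff N (Strunc a k r N) := by
  rw [Strunc, map_sum, Acoeff]
  apply Finset.sum_congr rfl
  intro f hf
  rw [prod_uu]

lemma coeff_X_pow_mul_eq_zero {m N : ℕ} (h : N < m) (g : PowerSeries ℚ) :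
    PowerSeries.coeff N ((X : PowerSeries ℚ) ^ m * g) = 0 := by
  rw [mul_comm, PowerSeries.coeff_mul_X_pow']
  simp [Nat.not_le.mpr h]

lemma coeff_Strunc_stable (a k r : ℕ) (hr : 1 ≤ r) {p M : ℕ} (hpM : p ≤ M) :
    PowerSeries.coeff p (Strunc a k r M) = Acoeff a (k : ℤ) r p := by
  rw [Acoeff_eq_coeff_Strunc, Strunc, Strunc, map_sum, map_sum]
  refine (Finset.sum_subset ?_ ?_).symm
  · intro f hf
    rw [mem_strictTuples] at hf ⊢
    exact ⟨fun j => ⟨(hf.1 j).1, le_trans (hf.1 j).2 hpM⟩, hf.2⟩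
  · intro f hfM hfp
    rw [mem_strictTuples] at hfM hfp
    have hex : ∃ j, p < f j := by
      by_contra hc
      push_neg at hc
      exact hfp ⟨fun j => ⟨(hfM.1 j).1, hc j⟩, hfM.2⟩
    obtain ⟨j0, hj0⟩ := hex
    have hsum : p < ∑ j, f j := lt_of_lt_of_le hj0
      (Finset.single_le_sum (fun j _ => Nat.zero_le (f j)) (Finset.mem_univ j0))
    have : p < r * ∑ j, f j := lt_of_lt_of_le hsum (Nat.le_mul_of_pos_left _ hr)
    rw [prod_uu]
    exact coeff_X_pow_mul_eq_zero this _


/-! ### coefficients of `(1-X^n)^{-j}` -/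

lemma coeff_mul_one_sub (c : ℕ → ℚ) (n t : ℕ) :
    PowerSeries.coeff t (PowerSeries.mk c * (1 - (X : PowerSeries ℚ) ^ n)) =
      c t - if n ≤ t then c (t - n) else 0 := by
  rw [mul_sub, mul_one, map_sub, PowerSeries.coeff_mul_X_pow', coeff_mk]
  split <;> simp [coeff_mk]

lemma inv_one_sub_X_pow (n : ℕ) (hn : 1 ≤ n) (j : ℕ) :
    ((1 - (X : PowerSeries ℚ) ^ n)⁻¹) ^ (j + 1) =
      PowerSeries.mk fun t => if n ∣ t then (((t / n + j).choose j : ℕ) : ℚ) else 0 := by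
  induction j with
  | zero =>
    have h1 : (PowerSeries.mk fun t => if n ∣ t then (((t / n + 0).choose 0 : ℕ) : ℚ) else 0) *
        (1 - (X : PowerSeries ℚ) ^ n) = 1 := by
      ext t
      rw [coeff_mul_one_sub, PowerSeries.coeff_one]
      simp only [Nat.choose_zero_right, Nat.cast_one]
      by_cases ht : t = 0
      · subst ht
        simp only [Nat.dvd_zero, if_true, Nat.zero_div, Nat.le_zero, if_pos rfl]
        rw [if_neg (by omega : ¬ n = 0)]
        ring
      · rw [if_neg ht]
        by_cases hd : n ∣ t
        · have hnt : n ≤ t := Nat.le_of_dvd (by omega) hd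
          have hd2 : n ∣ t - n := Nat.dvd_sub hd dvd_rfl
          rw [if_pos hd, if_pos hnt, if_pos hd2]; ring
        · rw [if_neg hd]
          by_cases hnt : n ≤ t
          · rw [if_pos hnt, if_neg (fun hcon => hd (by
              have := Nat.dvd_add hcon (dvd_refl n)
              rwa [Nat.sub_add_cancel hnt] at this))]
            ring
          · rw [if_neg hnt]; ring
    have h2 := one_sub_X_pow_unit n hn
    calc ((1 - (X : PowerSeries ℚ) ^ n)⁻¹) ^ (0 + 1) = 1 * (1 - (X : PowerSeries ℚ) ^ n)⁻¹ := by
          rw [zero_add, pow_one, one_mul]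
      _ = _ := by nth_rewrite 1 [← h1]; rw [mul_assoc, h2, mul_one]
  | succ j ih =>
    have h1 : (PowerSeries.mk fun t =>
          if n ∣ t then (((t / n + (j + 1)).choose (j + 1) : ℕ) : ℚ) else 0) *
        (1 - (X : PowerSeries ℚ) ^ n) =
        PowerSeries.mk fun t => if n ∣ t then (((t / n + j).choose j : ℕ) : ℚ) else 0 := by
      ext t
      rw [coeff_mul_one_sub, coeff_mk]
      by_cases ht : t = 0
      · subst ht
        simp only [Nat.dvd_zero, if_true, Nat.zero_div, Nat.le_zero, Nat.zero_add,
          Nat.choose_self, Nat.cast_one]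
        rw [if_neg (by omega : ¬ n = 0)]
        ring
      · by_cases hd : n ∣ t
        · obtain ⟨m, rfl⟩ := hd
          have hm : 1 ≤ m := by
            rcases Nat.eq_zero_or_pos m with rfl | h
            · omega
            · exact h
          have hnt : n ≤ n * m := Nat.le_mul_of_pos_right n hm
          have hd2 : n ∣ n * m - n := Nat.dvd_sub (dvd_mul_right n m) dvd_rfl
          have hdiv1 : n * m / n = m := Nat.mul_div_cancel_left _ (by omega)
          have hdiv2 : (n * m - n) / n = m - 1 := by
            have he : n * m - n = n * (m - 1) := by
              rw [Nat.mul_sub, mul_one]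
            rw [he, Nat.mul_div_cancel_left _ (by omega)]
          rw [if_pos (dvd_mul_right n m), if_pos (dvd_mul_right n m), if_pos hnt, if_pos hd2,
            hdiv1, hdiv2]
          have e1 : m + (j + 1) = (m + j) + 1 := by omega
          have e2 : m - 1 + (j + 1) = m + j := by omega
          rw [e1, e2, Nat.choose_succ_succ]
          push_cast; ring
        · rw [if_neg hd, if_neg hd]
          by_cases hnt : n ≤ t
          · rw [if_pos hnt, if_neg (fun hcon => hd (by
              have := Nat.dvd_add hcon (dvd_refl n)
              rwa [Nat.sub_add_cancel hnt] at this))]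
            ring
          · rw [if_neg hnt]; ring
    have h2 := one_sub_X_pow_unit n hn
    calc ((1 - (X : PowerSeries ℚ) ^ n)⁻¹) ^ (j + 1 + 1)
        = ((1 - (X : PowerSeries ℚ) ^ n)⁻¹) ^ (j + 1) * (1 - (X : PowerSeries ℚ) ^ n)⁻¹ := by
          rw [pow_succ]
      _ = (PowerSeries.mk fun t =>
            if n ∣ t then (((t / n + (j + 1)).choose (j + 1) : ℕ) : ℚ) else 0) *
          ((1 - (X : PowerSeries ℚ) ^ n) * (1 - (X : PowerSeries ℚ) ^ n)⁻¹) := by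
          rw [ih, ← h1, mul_assoc]
      _ = _ := by rw [h2, mul_one]

lemma coeff_uu_diag {j n N : ℕ} (hj : 1 ≤ j) (hn : 1 ≤ n) (hN : 1 ≤ N) :
    PowerSeries.coeff N (uu j j n) =
      if n ∣ N then (((N / n - 1).choose (j - 1) : ℕ) : ℚ) else 0 := by
  obtain ⟨j', rfl⟩ : ∃ j', j = j' + 1 := ⟨j - 1, by omega⟩
  rw [uu, dFac_coe, inv_one_sub_X_pow n hn j', mul_comm, PowerSeries.coeff_mul_X_pow', coeff_mk]
  by_cases hd : n ∣ N
  · obtain ⟨m, rfl⟩ := hd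
    have hm : 1 ≤ m := by
      rcases Nat.eq_zero_or_pos m with rfl | h
      · omega
      · exact h
    rw [if_pos (dvd_mul_right n m), Nat.mul_div_cancel_left _ (by omega : 0 < n)]
    by_cases hjm : j' + 1 ≤ m
    · have hle : (j' + 1) * n ≤ n * m := by
        rw [mul_comm]
        exact Nat.mul_le_mul_left n hjm
      have heq : n * m - (j' + 1) * n = (m - (j' + 1)) * n := by
        rw [tsub_mul, mul_comm n m]
      have hd2 : n ∣ n * m - (j' + 1) * n := by
        rw [heq]; exact dvd_mul_left n (m - (j' + 1))
      have hdiv2 : (n * m - (j' + 1) * n) / n = m - (j' + 1) := by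
        rw [heq, Nat.mul_div_cancel _ (by omega : 0 < n)]
      rw [if_pos hle, if_pos hd2, hdiv2]
      have e1 : m - (j' + 1) + j' = m - 1 := by omega
      have e2 : j' + 1 - 1 = j' := by omega
      rw [e1, e2]
    · have hlt : n * m < (j' + 1) * n := by nlinarith
      rw [if_neg (Nat.not_le.mpr hlt)]
      have e2 : j' + 1 - 1 = j' := by omega
      rw [e2, Nat.choose_eq_zero_of_lt (by omega), Nat.cast_zero]
  · rw [if_neg hd]
    by_cases h : (j' + 1) * n ≤ N
    · rw [if_pos h, if_neg (fun hcon => hd (by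
        have := Nat.dvd_add hcon (dvd_mul_left n (j' + 1))
        rwa [Nat.sub_add_cancel h] at this))]
    · rw [if_neg h]


/-! ### the case `a = 1`, diagonal `r = k = j` -/

lemma strictTuples_one (k r N : ℕ) :
    ∑ f ∈ strictTuples 1 N, ∏ j, uu k r (f j) = ∑ n ∈ Finset.Icc 1 N, uu k r n := by
  apply Finset.sum_bij (i := fun f _ => f 0)
  · intro f hf
    rw [mem_strictTuples] at hf
    exact Finset.mem_Icc.mpr (hf.1 0)
  · intro f hf g hg h
    funext j
    have : j = 0 := Subsingleton.elim _ _
    rw [this, h]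
  · intro n hn
    refine ⟨fun _ => n, ?_, rfl⟩
    rw [mem_strictTuples]
    exact ⟨fun _ => Finset.mem_Icc.mp hn, fun i j hij => absurd hij (by omega)⟩
  · intro f hf
    exact (Fin.prod_univ_one _)

lemma Acoeff_one (k r N : ℕ) :
    Acoeff 1 (k : ℤ) r N = ∑ n ∈ Finset.Icc 1 N, PowerSeries.coeff N (uu k r n) := by
  rw [Acoeff_eq_coeff_Strunc, Strunc, strictTuples_one, map_sum]

lemma filter_Icc_divisors (N : ℕ) (hN : 1 ≤ N) :
    (Finset.Icc 1 N).filter (· ∣ N) = N.divisors := by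
  ext d
  simp only [Finset.mem_filter, Finset.mem_Icc, Nat.mem_divisors]
  constructor
  · rintro ⟨⟨h1, h2⟩, h3⟩
    exact ⟨h3, by omega⟩
  · rintro ⟨h1, h2⟩
    have hd1 : 0 < d := Nat.pos_of_dvd_of_pos h1 (by omega)
    exact ⟨⟨hd1, Nat.le_of_dvd (by omega) h1⟩, h1⟩

def chpoly (j : ℕ) : Polynomial ℚ :=
  Polynomial.C ((((j - 1).factorial : ℕ) : ℚ)⁻¹) *
    ∏ l ∈ Finset.range (j - 1), (Polynomial.X - Polynomial.C ((l : ℚ) + 1))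

lemma chpoly_natDegree_lt (j : ℕ) (hj : 1 ≤ j) : (chpoly j).natDegree < j := by
  apply lt_of_le_of_lt (Polynomial.natDegree_C_mul_le _ _)
  apply lt_of_le_of_lt (Polynomial.natDegree_prod_le _ _)
  have : ∀ l ∈ Finset.range (j - 1),
      (Polynomial.X - Polynomial.C ((l : ℚ) + 1)).natDegree = 1 := fun l _ =>
    Polynomial.natDegree_X_sub_C _
  rw [Finset.sum_congr rfl this, Finset.sum_const, smul_eq_mul, mul_one, Finset.card_range]
  omega

lemma chpoly_eval (j d : ℕ) (hj : 1 ≤ j) (hd : 1 ≤ d) :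
    (chpoly j).eval (d : ℚ) = (((d - 1).choose (j - 1) : ℕ) : ℚ) := by
  rw [chpoly, Polynomial.eval_mul, Polynomial.eval_C, Polynomial.eval_prod]
  simp only [Polynomial.eval_sub, Polynomial.eval_X, Polynomial.eval_C]
  by_cases h : j - 1 ≤ d - 1
  · have hprod : ∏ l ∈ Finset.range (j - 1), ((d : ℚ) - ((l : ℚ) + 1)) =
        (((d - 1).descFactorial (j - 1) : ℕ) : ℚ) := by
      rw [Nat.descFactorial_eq_prod_range, Nat.cast_prod]
      apply Finset.prod_congr rfl
      intro l hl
      rw [Finset.mem_range] at hl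
      have h1 : l ≤ d - 1 := by omega
      rw [Nat.cast_sub h1, Nat.cast_sub (by omega : 1 ≤ d)]
      push_cast
      ring
    rw [hprod]
    have hdvd := Nat.factorial_dvd_descFactorial (d - 1) (j - 1)
    rw [Nat.choose_eq_descFactorial_div_factorial,
      Nat.cast_div hdvd (Nat.cast_ne_zero.mpr (Nat.factorial_ne_zero _)), inv_mul_eq_div]
  · rw [Nat.choose_eq_zero_of_lt (by omega), Nat.cast_zero]
    apply mul_eq_zero_of_right
    apply Finset.prod_eq_zero (Finset.mem_range.mpr (by omega : d - 1 < j - 1))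
    rw [Nat.cast_sub (by omega : 1 ≤ d)]
    push_cast
    ring

lemma Aser_diag_eq (j : ℕ) (hj : 1 ≤ j) :
    Aser 1 (j : ℤ) j = ∑ i ∈ Finset.range j, (chpoly j).coeff i • Gq (i + 1) := by
  apply PowerSeries.ext
  intro N
  rw [Aser, coeff_mk, map_sum]
  simp only [LinearMap.map_smul, Gq, coeff_mk, smul_eq_mul]
  by_cases hN : N = 0
  · subst hN
    rw [Acoeff_one]
    simp [Nat.divisors_zero]
  · have hN1 : 1 ≤ N := by omega
    rw [Acoeff_one]
    calc ∑ n ∈ Finset.Icc 1 N, PowerSeries.coeff N (uu j j n)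
        = ∑ n ∈ Finset.Icc 1 N,
            (if n ∣ N then (((N / n - 1).choose (j - 1) : ℕ) : ℚ) else 0) := by
          apply Finset.sum_congr rfl
          intro n hn
          exact coeff_uu_diag hj (Finset.mem_Icc.mp hn).1 hN1
      _ = ∑ n ∈ N.divisors, (((N / n - 1).choose (j - 1) : ℕ) : ℚ) := by
          rw [← Finset.sum_filter, filter_Icc_divisors N hN1]
      _ = ∑ d ∈ N.divisors, (((d - 1).choose (j - 1) : ℕ) : ℚ) :=
          Nat.sum_div_divisors N (fun d => (((d - 1).choose (j - 1) : ℕ) : ℚ))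
      _ = ∑ d ∈ N.divisors, (chpoly j).eval (d : ℚ) := by
          apply Finset.sum_congr rfl
          intro d hd
          exact (chpoly_eval j d hj (Nat.pos_of_mem_divisors hd)).symm
      _ = ∑ d ∈ N.divisors, ∑ i ∈ Finset.range j, (chpoly j).coeff i * (d : ℚ) ^ i := by
          apply Finset.sum_congr rfl
          intro d hd
          exact Polynomial.eval_eq_sum_range' (chpoly_natDegree_lt j hj) _
      _ = ∑ i ∈ Finset.range j, (chpoly j).coeff i * ∑ d ∈ N.divisors, (d : ℚ) ^ i := by
          rw [Finset.sum_comm]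
          apply Finset.sum_congr rfl
          intro i _
          rw [Finset.mul_sum]
      _ = ∑ i ∈ Finset.range j, (chpoly j).coeff i * ∑ d ∈ N.divisors, (d : ℚ) ^ (i + 1 - 1) := by
          simp only [Nat.add_sub_cancel]

lemma Aser_diag_mem (j : ℕ) (hj : 1 ≤ j) : Aser 1 (j : ℤ) j ∈ E j := by
  rw [Aser_diag_eq j hj]
  apply Submodule.sum_mem
  intro i hi
  rw [Finset.mem_range] at hi
  exact Submodule.smul_mem _ _ (Gq_mem_E (by omega) (by omega))


/-! ### the case `a = 1`, general `1 ≤ r ≤ k` -/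

lemma Xpow_mem_span (k : ℕ) :
    ∀ s r : ℕ, 1 ≤ r → r ≤ k → k - r ≤ s →
      (Polynomial.X : Polynomial ℚ) ^ r ∈ Submodule.span ℚ
        (Set.range fun j : Fin k =>
          (Polynomial.X : Polynomial ℚ) ^ ((j : ℕ) + 1) *
            (1 - Polynomial.X) ^ (k - ((j : ℕ) + 1))) := by
  intro s
  induction s with
  | zero =>
    intro r h1 h2 h3
    have hrk : r = k := by omega
    subst hrk
    apply Submodule.subset_span
    refine ⟨⟨r - 1, by omega⟩, ?_⟩
    simp only [show r - 1 + 1 = r from by omega, Nat.sub_self, pow_zero, mul_one]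
  | succ s ih =>
    intro r h1 h2 h3
    by_cases hs : k - r ≤ s
    · exact ih r h1 h2 hs
    · have hexp : (Polynomial.X : Polynomial ℚ) ^ r * (1 - Polynomial.X) ^ (k - r) =
          ∑ i ∈ Finset.range (k - r + 1),
            ((-1 : ℚ) ^ i * (((k - r).choose i : ℕ) : ℚ)) • Polynomial.X ^ (r + i) := by
        rw [show (1 - Polynomial.X : Polynomial ℚ) = -Polynomial.X + 1 from by ring, add_pow,
          Finset.mul_sum]
        apply Finset.sum_congr rfl
        intro i _
        simp only [Polynomial.smul_eq_C_mul, map_mul, map_pow, map_neg, map_one, one_pow,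
          mul_one, map_natCast]
        ring
      have h4 : (Polynomial.X : Polynomial ℚ) ^ r =
          Polynomial.X ^ r * (1 - Polynomial.X) ^ (k - r) -
            ∑ i ∈ Finset.range (k - r),
              ((-1 : ℚ) ^ (i + 1) * (((k - r).choose (i + 1) : ℕ) : ℚ)) •
                Polynomial.X ^ (r + (i + 1)) := by
        rw [hexp, Finset.sum_range_succ']
        simp only [pow_zero, Nat.choose_zero_right, Nat.cast_one, one_mul, one_smul,
          Nat.add_zero]
        ring
      rw [h4]
      apply sub_mem
      · apply Submodule.subset_span
        refine ⟨⟨r - 1, by omega⟩, ?_⟩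
        simp only [show r - 1 + 1 = r from by omega]
      · apply Submodule.sum_mem
        intro i hi
        rw [Finset.mem_range] at hi
        exact Submodule.smul_mem _ _ (ih (r + (i + 1)) (by omega) (by omega) (by omega))

lemma uu_decomp (k r : ℕ) (hr : 1 ≤ r) (hrk : r ≤ k) :
    ∃ c : Fin k →₀ ℚ, ∀ n : ℕ, 1 ≤ n →
      uu k r n = ∑ j : Fin k, c j • uu ((j : ℕ) + 1) ((j : ℕ) + 1) n := by
  obtain ⟨c, hc⟩ := Finsupp.mem_span_range_iff_exists_finsupp.mp
    (Xpow_mem_span k (k - r) r hr hrk le_rfl)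
  refine ⟨c, fun n hn => ?_⟩
  have hsum : ∑ j : Fin k, c j •
      ((Polynomial.X : Polynomial ℚ) ^ ((j : ℕ) + 1) *
        (1 - Polynomial.X) ^ (k - ((j : ℕ) + 1))) = Polynomial.X ^ r := by
    rw [← hc]
    exact (Finsupp.sum_fintype c (fun j a => a •
      ((Polynomial.X : Polynomial ℚ) ^ ((j : ℕ) + 1) *
        (1 - Polynomial.X) ^ (k - ((j : ℕ) + 1)))) (fun j => zero_smul ℚ _)).symm
  have happ : ∑ j : Fin k, c j • (((X : PowerSeries ℚ) ^ n) ^ ((j : ℕ) + 1) *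
      (1 - (X : PowerSeries ℚ) ^ n) ^ (k - ((j : ℕ) + 1))) = ((X : PowerSeries ℚ) ^ n) ^ r := by
    have h := congrArg (Polynomial.aeval ((X : PowerSeries ℚ) ^ n)) hsum
    simpa using h
  have hmul := congrArg (fun z => z * dFac n (k : ℤ)) happ
  simp only [Finset.sum_mul] at hmul
  have hterm : ∀ j : Fin k,
      (c j • (((X : PowerSeries ℚ) ^ n) ^ ((j : ℕ) + 1) *
        (1 - (X : PowerSeries ℚ) ^ n) ^ (k - ((j : ℕ) + 1)))) * dFac n (k : ℤ) =
      c j • uu ((j : ℕ) + 1) ((j : ℕ) + 1) n := by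
    intro j
    rw [smul_mul_assoc, mul_assoc, dFac_coe,
      pow_mul_inv_pow n ((j : ℕ) + 1) k hn (Nat.succ_le_of_lt j.isLt)]
    rw [uu, dFac_coe, ← pow_mul, mul_comm ((j : ℕ) + 1) n, pow_mul]
  rw [Finset.sum_congr rfl (fun j _ => hterm j)] at hmul
  rw [uu, mul_comm r n, pow_mul]
  exact hmul.symm

lemma Aser_one_mem (k r : ℕ) (hr : 1 ≤ r) (hrk : r ≤ k) : Aser 1 (k : ℤ) r ∈ E k := by
  obtain ⟨c, hc⟩ := uu_decomp k r hr hrk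
  have hser : Aser 1 (k : ℤ) r =
      ∑ j : Fin k, c j • Aser 1 ((((j : ℕ) + 1 : ℕ)) : ℤ) ((j : ℕ) + 1) := by
    apply PowerSeries.ext
    intro N
    rw [Aser, coeff_mk, Acoeff_one, map_sum]
    simp only [LinearMap.map_smul, Aser, coeff_mk, smul_eq_mul]
    have hterm : ∀ n ∈ Finset.Icc 1 N, PowerSeries.coeff N (uu k r n) =
        ∑ j : Fin k, c j * PowerSeries.coeff N (uu ((j : ℕ) + 1) ((j : ℕ) + 1) n) := by
      intro n hn
      rw [hc n (Finset.mem_Icc.mp hn).1, map_sum]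
      simp only [LinearMap.map_smul, smul_eq_mul]
    rw [Finset.sum_congr rfl hterm, Finset.sum_comm]
    apply Finset.sum_congr rfl
    intro j _
    rw [Acoeff_one, Finset.mul_sum]
  rw [hser]
  exact Submodule.sum_mem _ fun j _ => Submodule.smul_mem _ _
    (E_mono (Nat.succ_le_of_lt j.isLt) (Aser_diag_mem _ (by omega)))


/-! ### Newton's identity machinery -/

lemma strictTuples_powerset (a M : ℕ) (G : ℕ → PowerSeries ℚ) :
    ∑ f ∈ strictTuples a M, ∏ j, G (f j) =
      ∑ t ∈ Finset.powersetCard a (Finset.univ : Finset (Fin M)), ∏ i ∈ t, G ((i : ℕ) + 1) := by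
  refine Finset.sum_bij'
    (fun f hf => (Finset.univ : Finset (Fin a)).image fun j =>
      (⟨f j - 1, by
        have h := (mem_strictTuples.mp hf).1 j
        omega⟩ : Fin M))
    (fun t ht => fun j =>
      ((t.orderEmbOfFin (Finset.mem_powersetCard.mp ht).2 j : Fin M) : ℕ) + 1)
    ?_ ?_ ?_ ?_ ?_
  · -- hi
    intro f hf
    have hmem := mem_strictTuples.mp hf
    rw [Finset.mem_powersetCard]
    refine ⟨Finset.subset_univ _, ?_⟩
    rw [Finset.card_image_of_injOn, Finset.card_univ, Fintype.card_fin]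
    intro j1 _ j2 _ h
    have h1 := hmem.1 j1
    have h2 := hmem.1 j2
    have := congrArg Fin.val h
    simp only [] at this
    exact hmem.2.injective (by omega)
  · -- hj
    intro t ht
    rw [mem_strictTuples]
    constructor
    · intro j
      have := ((t.orderEmbOfFin (Finset.mem_powersetCard.mp ht).2) j).isLt
      omega
    · intro j1 j2 h
      have := (t.orderEmbOfFin (Finset.mem_powersetCard.mp ht).2).strictMono h
      rw [Fin.lt_iff_val_lt_val] at this
      dsimp only
      omega
  · -- left_inv
    intro f hf
    have hmem := mem_strictTuples.mp hf
    have key : ∀ (hcd : ((Finset.univ : Finset (Fin a)).image fun j =>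
        (⟨f j - 1, by have h := hmem.1 j; omega⟩ : Fin M)).card = a) (j : Fin a),
        ((((Finset.univ : Finset (Fin a)).image fun j =>
          (⟨f j - 1, by have h := hmem.1 j; omega⟩ : Fin M)).orderEmbOfFin hcd j : Fin M) : ℕ)
          + 1 = f j := by
      intro hcd j
      have huniq := Finset.orderEmbOfFin_unique
        (f := fun j => (⟨f j - 1, by have h := hmem.1 j; omega⟩ : Fin M)) hcd
        (fun x => Finset.mem_image_of_mem _ (Finset.mem_univ x))
        (fun j1 j2 h => by
          have h1 := hmem.1 j1
          have h2 := hmem.1 j2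
          have := hmem.2 h
          rw [Fin.mk_lt_mk]
          omega)
      rw [← congrFun huniq j]
      have h1 := hmem.1 j
      simp only []
      omega
    funext j
    exact key _ j
  · -- right_inv
    intro t ht
    dsimp only
    have hc := (Finset.mem_powersetCard.mp ht).2
    have hsub : ((Finset.univ : Finset (Fin a)).image fun j =>
        (⟨((t.orderEmbOfFin (Finset.mem_powersetCard.mp ht).2 j : Fin M) : ℕ) + 1 - 1, by
          have := ((t.orderEmbOfFin (Finset.mem_powersetCard.mp ht).2) j).isLt
          omega⟩ : Fin M)) ⊆ t := by
      intro x hx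
      obtain ⟨j, _, rfl⟩ := Finset.mem_image.mp hx
      have heq : (⟨((t.orderEmbOfFin (Finset.mem_powersetCard.mp ht).2 j : Fin M) : ℕ) + 1 - 1,
          by have := ((t.orderEmbOfFin (Finset.mem_powersetCard.mp ht).2) j).isLt; omega⟩
            : Fin M) = t.orderEmbOfFin (Finset.mem_powersetCard.mp ht).2 j := by
        apply Fin.ext
        simp
      rw [heq]
      exact Finset.orderEmbOfFin_mem t _ j
    have hcardim : ((Finset.univ : Finset (Fin a)).image fun j =>
        (⟨((t.orderEmbOfFin (Finset.mem_powersetCard.mp ht).2 j : Fin M) : ℕ) + 1 - 1, by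
          have := ((t.orderEmbOfFin (Finset.mem_powersetCard.mp ht).2) j).isLt
          omega⟩ : Fin M)).card = a := by
      rw [Finset.card_image_of_injOn, Finset.card_univ, Fintype.card_fin]
      intro j1 _ j2 _ h
      apply (t.orderEmbOfFin (Finset.mem_powersetCard.mp ht).2).injective
      apply Fin.ext
      have := congrArg Fin.val h
      simp only [] at this
      omega
    exact Finset.eq_of_subset_of_card_le hsub (by rw [hcardim, hc])
  · -- values
    intro f hf
    have hmem := mem_strictTuples.mp hf
    rw [Finset.prod_image (by
      intro j1 _ j2 _ h
      have h1 := hmem.1 j1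
      have h2 := hmem.1 j2
      have := congrArg Fin.val h
      simp only [] at this
      exact hmem.2.injective (by omega))]
    apply Finset.prod_congr rfl
    intro j _
    have h1 := hmem.1 j
    show G (f j) = G (f j - 1 + 1)
    rw [Nat.sub_add_cancel h1.1]


lemma sum_Icc_fin (M : ℕ) (g : ℕ → PowerSeries ℚ) :
    ∑ n ∈ Finset.Icc 1 M, g n = ∑ l : Fin M, g ((l : ℕ) + 1) := by
  refine Finset.sum_bij' (fun n hn => (⟨n - 1, by
      have := Finset.mem_Icc.mp hn; omega⟩ : Fin M))
    (fun l _ => (l : ℕ) + 1) ?_ ?_ ?_ ?_ ?_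
  · intro n hn; exact Finset.mem_univ _
  · intro l _
    refine Finset.mem_Icc.mpr ⟨by omega, ?_⟩
    have := l.isLt
    omega
  · intro n hn
    have := Finset.mem_Icc.mp hn
    show n - 1 + 1 = n
    omega
  · intro l _
    apply Fin.ext
    show ((l : ℕ) + 1 - 1) = (l : ℕ)
    omega
  · intro n hn
    have := Finset.mem_Icc.mp hn
    show g n = g (n - 1 + 1)
    rw [Nat.sub_add_cancel this.1]

lemma aeval_esymm (a k r M : ℕ) :
    (MvPolynomial.aeval fun l : Fin M => uu k r ((l : ℕ) + 1))
      (MvPolynomial.esymm (Fin M) ℚ a) = Strunc a k r M := by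
  rw [MvPolynomial.esymm, map_sum, Strunc, strictTuples_powerset a M (uu k r)]
  apply Finset.sum_congr rfl
  intro t _
  rw [map_prod]
  simp [MvPolynomial.aeval_X]

lemma aeval_psum (k r M i : ℕ) :
    (MvPolynomial.aeval fun l : Fin M => uu k r ((l : ℕ) + 1))
      (MvPolynomial.psum (Fin M) ℚ i) = Strunc 1 (k * i) (r * i) M := by
  rw [MvPolynomial.psum, map_sum, Strunc, strictTuples_one, sum_Icc_fin]
  apply Finset.sum_congr rfl
  intro l _
  rw [map_pow, MvPolynomial.aeval_X, uu_pow]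

lemma newton_Strunc (a k r M : ℕ) :
    (a : PowerSeries ℚ) * Strunc a k r M =
      (-1 : PowerSeries ℚ) ^ (a + 1) *
        ∑ x ∈ (Finset.HasAntidiagonal.antidiagonal a).filter (fun x => x.1 < a),
          (-1 : PowerSeries ℚ) ^ x.1 * Strunc x.1 k r M * Strunc 1 (k * x.2) (r * x.2) M := by
  have h := congrArg (MvPolynomial.aeval fun l : Fin M => uu k r ((l : ℕ) + 1))
    (MvPolynomial.mul_esymm_eq_sum (Fin M) ℚ a)
  simp only [map_mul, map_natCast, map_pow, map_neg, map_one, map_sum,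
    aeval_esymm, aeval_psum] at h
  exact h


lemma newton_Aser (a k r : ℕ) (hr : 1 ≤ r) :
    (a : ℚ) • Aser a (k : ℤ) r =
      ∑ x ∈ (Finset.HasAntidiagonal.antidiagonal a).filter (fun x => x.1 < a),
        ((-1 : ℚ) ^ (a + 1) * (-1 : ℚ) ^ x.1) •
          (Aser x.1 (k : ℤ) r * Aser 1 ((k * x.2 : ℕ) : ℤ) (r * x.2)) := by
  apply PowerSeries.ext
  intro N
  have key : ∀ x ∈ (Finset.HasAntidiagonal.antidiagonal a).filter (fun x => x.1 < a),
      PowerSeries.coeff N (Aser x.1 (k : ℤ) r * Aser 1 ((k * x.2 : ℕ) : ℤ) (r * x.2)) =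
      PowerSeries.coeff N (Strunc x.1 k r N * Strunc 1 (k * x.2) (r * x.2) N) := by
    intro x hx
    rw [Finset.mem_filter, Finset.HasAntidiagonal.mem_antidiagonal] at hx
    have hx2 : 1 ≤ x.2 := by omega
    have hrx2 : 1 ≤ r * x.2 := by
      have := Nat.mul_le_mul hr hx2
      omega
    rw [PowerSeries.coeff_mul, PowerSeries.coeff_mul]
    apply Finset.sum_congr rfl
    intro p hp
    rw [Finset.HasAntidiagonal.mem_antidiagonal] at hp
    rw [Aser, coeff_mk, Aser, coeff_mk,
      coeff_Strunc_stable x.1 k r hr (by omega : p.1 ≤ N),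
      coeff_Strunc_stable 1 (k * x.2) (r * x.2) hrx2 (by omega : p.2 ≤ N)]
  rw [map_smul, smul_eq_mul, Aser, coeff_mk, Acoeff_eq_coeff_Strunc, map_sum]
  simp only [map_smul, smul_eq_mul]
  rw [Finset.sum_congr rfl (fun x hx => by rw [key x hx])]
  have hns := congrArg (PowerSeries.coeff N) (newton_Strunc a k r N)
  have e1 : PowerSeries.coeff N ((a : PowerSeries ℚ) * Strunc a k r N) =
      (a : ℚ) * PowerSeries.coeff N (Strunc a k r N) := by
    rw [← map_natCast (PowerSeries.C) a, PowerSeries.coeff_C_mul]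
  have hCneg : ∀ m : ℕ, ((-1 : PowerSeries ℚ) ^ m) = PowerSeries.C ((-1 : ℚ) ^ m) := by
    intro m
    rw [map_pow, map_neg, map_one]
  have e2 : PowerSeries.coeff N ((-1 : PowerSeries ℚ) ^ (a + 1) *
      ∑ x ∈ (Finset.HasAntidiagonal.antidiagonal a).filter (fun x => x.1 < a),
        (-1 : PowerSeries ℚ) ^ x.1 * Strunc x.1 k r N * Strunc 1 (k * x.2) (r * x.2) N) =
      ∑ x ∈ (Finset.HasAntidiagonal.antidiagonal a).filter (fun x => x.1 < a),
        ((-1 : ℚ) ^ (a + 1) * (-1 : ℚ) ^ x.1) *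
          PowerSeries.coeff N (Strunc x.1 k r N * Strunc 1 (k * x.2) (r * x.2) N) := by
    rw [hCneg, PowerSeries.coeff_C_mul, map_sum, Finset.mul_sum]
    apply Finset.sum_congr rfl
    intro x _
    rw [hCneg, mul_assoc, PowerSeries.coeff_C_mul]
    ring
  rw [e1] at hns
  rw [e2] at hns
  rw [hns]

lemma Aser_zero (k : ℤ) (r : ℕ) : Aser 0 k r = 1 := by
  apply PowerSeries.ext
  intro N
  rw [Aser, coeff_mk, Acoeff]
  have hterm : ∀ f ∈ strictTuples 0 N,
      PowerSeries.coeff N ((X : PowerSeries ℚ) ^ (r * ∑ j, f j) * ∏ j, dFac (f j) k) =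
      PowerSeries.coeff N 1 := by
    intro f _
    simp
  rw [Finset.sum_congr rfl hterm, Finset.sum_const]
  have hcard : (strictTuples 0 N).card = 1 := by
    have hfil : (Fintype.piFinset fun _ : Fin 0 => Finset.Icc 1 N).filter
        (fun f => StrictMono f) = Fintype.piFinset fun _ : Fin 0 => Finset.Icc 1 N :=
      Finset.filter_true_of_mem (fun f _ => fun i => i.elim0)
    rw [strictTuples, hfil, Fintype.card_piFinset]
    simp
  rw [hcard, one_smul]

lemma Aser_mem (a k r : ℕ) (hr : 1 ≤ r) (hrk : r ≤ k) : Aser a (k : ℤ) r ∈ E (a * k) := by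
  induction a using Nat.strong_induction_on with
  | _ a ih =>
    rcases Nat.eq_zero_or_pos a with rfl | ha
    · rw [Aser_zero]
      exact one_mem_E _
    · have hne : (a : ℚ) ≠ 0 := Nat.cast_ne_zero.mpr (by omega)
      have h := newton_Aser a k r hr
      have heq : Aser a (k : ℤ) r = (a : ℚ)⁻¹ •
          ∑ x ∈ (Finset.HasAntidiagonal.antidiagonal a).filter (fun x => x.1 < a),
            ((-1 : ℚ) ^ (a + 1) * (-1 : ℚ) ^ x.1) •
              (Aser x.1 (k : ℤ) r * Aser 1 ((k * x.2 : ℕ) : ℤ) (r * x.2)) := by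
        rw [← h, smul_smul, inv_mul_cancel₀ hne, one_smul]
      rw [heq]
      apply Submodule.smul_mem
      apply Submodule.sum_mem
      intro x hx
      rw [Finset.mem_filter, Finset.HasAntidiagonal.mem_antidiagonal] at hx
      apply Submodule.smul_mem
      have hx2 : 1 ≤ x.2 := by omega
      have h1 : Aser x.1 (k : ℤ) r ∈ E (x.1 * k) := ih x.1 (by omega)
      have h2 : Aser 1 ((k * x.2 : ℕ) : ℤ) (r * x.2) ∈ E (k * x.2) :=
        Aser_one_mem (k * x.2) (r * x.2)
          (by have := Nat.mul_le_mul hr hx2; omega)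
          (Nat.mul_le_mul hrk le_rfl)
      have hmul := mul_mem_E h1 h2
      have hw : x.1 * k + k * x.2 = a * k := by
        have hxa : x.1 + x.2 = a := hx.1
        calc x.1 * k + k * x.2 = (x.1 + x.2) * k := by ring
          _ = a * k := by rw [hxa]
      rw [hw] at hmul
      exact hmul


/-! ### conversion to MvPolynomial statement -/

lemma wtd_le_iff {W : ℕ} (Q : MvPolynomial (Fin W) ℚ) (n : ℕ) :
    Q.weightedTotalDegree (fun i : Fin W => (i : ℕ) + 1) ≤ n ↔
      ∀ d ∈ Q.support, (Finsupp.weight fun i : Fin W => (i : ℕ) + 1) d ≤ n := by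
  simp only [MvPolynomial.weightedTotalDegree]
  exact Finset.sup_le_iff

lemma wtd_mul (W : ℕ) (p q : MvPolynomial (Fin W) ℚ) :
    (p * q).weightedTotalDegree (fun i : Fin W => (i : ℕ) + 1) ≤
      p.weightedTotalDegree (fun i : Fin W => (i : ℕ) + 1) +
        q.weightedTotalDegree (fun i : Fin W => (i : ℕ) + 1) := by
  rw [wtd_le_iff]
  intro d hd
  obtain ⟨u, hu, v, hv, huv⟩ := Finset.mem_add.mp (MvPolynomial.support_mul p q hd)
  rw [← huv, map_add]
  exact add_le_add ((wtd_le_iff p _).mp le_rfl u hu) ((wtd_le_iff q _).mp le_rfl v hv)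

lemma wtd_X (W : ℕ) (i : Fin W) :
    (MvPolynomial.X i : MvPolynomial (Fin W) ℚ).weightedTotalDegree
      (fun i : Fin W => (i : ℕ) + 1) ≤ (i : ℕ) + 1 := by
  rw [wtd_le_iff]
  intro d hd
  rw [MvPolynomial.support_X, Finset.mem_singleton] at hd
  subst hd
  rw [Finsupp.weight_apply, Finsupp.sum_single_index (by simp)]
  simp

lemma wtd_one (W : ℕ) :
    (1 : MvPolynomial (Fin W) ℚ).weightedTotalDegree (fun i : Fin W => (i : ℕ) + 1) ≤ 0 := by
  rw [wtd_le_iff]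
  intro d hd
  rw [MvPolynomial.mem_support_iff, MvPolynomial.coeff_one] at hd
  by_cases h0 : d = 0
  · subst h0
    rw [map_zero]
  · rw [if_neg (fun h : (0 : Fin W →₀ ℕ) = d => h0 h.symm)] at hd
    exact absurd rfl hd

lemma gen_poly (W : ℕ) (m : Multiset ℕ) (hm : ∀ j ∈ m, 1 ≤ j ∧ j ≤ W) :
    ∃ Q : MvPolynomial (Fin W) ℚ,
      Q.weightedTotalDegree (fun i : Fin W => (i : ℕ) + 1) ≤ m.sum ∧
      MvPolynomial.aeval (fun i : Fin W => Gq ((i : ℕ) + 1)) Q = (m.map Gq).prod := by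
  induction m using Multiset.induction_on with
  | empty =>
    exact ⟨1, by simpa using wtd_one W, by simp⟩
  | cons j m IH =>
    have hj := hm j (Multiset.mem_cons_self j m)
    obtain ⟨Q', hQ1, hQ2⟩ := IH (fun x hx => hm x (Multiset.mem_cons_of_mem hx))
    have hjW : j - 1 < W := by omega
    refine ⟨MvPolynomial.X (⟨j - 1, hjW⟩ : Fin W) * Q', ?_, ?_⟩
    · apply le_trans (wtd_mul W _ _)
      rw [Multiset.sum_cons]
      have hX := wtd_X W (⟨j - 1, hjW⟩ : Fin W)
      have hval : ((⟨j - 1, hjW⟩ : Fin W) : ℕ) + 1 = j := Nat.sub_add_cancel hj.1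
      rw [hval] at hX
      exact add_le_add hX hQ1
    · rw [map_mul, MvPolynomial.aeval_X, hQ2, Multiset.map_cons, Multiset.prod_cons]
      have hval : ((⟨j - 1, hjW⟩ : Fin W) : ℕ) + 1 = j := Nat.sub_add_cancel hj.1
      rw [hval]

/-- Proposition 3.1.  For `a, k, r ∈ ℕ` with `1 ≤ r ≤ k`, the series
`𝒜_{a,k,r}` lies in the `ℚ`-subalgebra of `ℚ⟦q⟧` generated by the Eisenstein series
`𝒢_1, …, 𝒢_{ak}`, and can be written as a `ℚ`-linear combination of monomials
`𝒢_{j₁}⋯𝒢_{j_t}` with `j₁ + ⋯ + j_t ≤ ak`: it is the image under evaluation at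
`(𝒢_1, …, 𝒢_{ak})` of a multivariate polynomial whose weighted total degree, with the
variable corresponding to `𝒢_j` given weight `j`, is at most `ak`. -/
theorem A_polynomial_in_Eisenstein (a k r : ℕ) (ha : 1 ≤ a) (hr : 1 ≤ r) (hrk : r ≤ k) :
    ∃ Q : MvPolynomial (Fin (a * k)) ℚ,
      Q.weightedTotalDegree (fun i : Fin (a * k) => (i : ℕ) + 1) ≤ a * k ∧
      Aser a (k : ℤ) r =
        MvPolynomial.aeval (fun i : Fin (a * k) => Gq ((i : ℕ) + 1)) Q := by
  have hmem := Aser_mem a k r hr hrk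
  let P : Submodule ℚ (PowerSeries ℚ) :=
    { carrier := {s | ∃ Q : MvPolynomial (Fin (a * k)) ℚ,
        Q.weightedTotalDegree (fun i : Fin (a * k) => (i : ℕ) + 1) ≤ a * k ∧
        s = MvPolynomial.aeval (fun i : Fin (a * k) => Gq ((i : ℕ) + 1)) Q}
      add_mem' := by
        rintro x y ⟨Q1, h1, rfl⟩ ⟨Q2, h2, rfl⟩
        refine ⟨Q1 + Q2, ?_, (map_add _ _ _).symm⟩
        rw [wtd_le_iff]
        intro d hd
        rcases Finset.mem_union.mp (MvPolynomial.support_add hd) with h | h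
        · exact le_trans ((wtd_le_iff Q1 _).mp le_rfl d h) h1
        · exact le_trans ((wtd_le_iff Q2 _).mp le_rfl d h) h2
      zero_mem' := by
        refine ⟨0, ?_, (map_zero _).symm⟩
        rw [MvPolynomial.weightedTotalDegree_zero]
        exact bot_le
      smul_mem' := by
        rintro c x ⟨Q, h1, rfl⟩
        refine ⟨c • Q, ?_, (map_smul _ _ _).symm⟩
        rw [wtd_le_iff]
        intro d hd
        exact le_trans ((wtd_le_iff Q _).mp le_rfl d (MvPolynomial.support_smul hd)) h1 }
  suffices hs : Aser a (k : ℤ) r ∈ P by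
    obtain ⟨Q, h1, h2⟩ := hs
    exact ⟨Q, h1, h2⟩
  refine Submodule.span_le.mpr ?_ hmem
  rintro s ⟨m, hm1, hm2, rfl⟩
  have hjW : ∀ j ∈ m, 1 ≤ j ∧ j ≤ a * k := by
    intro j hj
    refine ⟨hm1 j hj, le_trans ?_ hm2⟩
    obtain ⟨m', rfl⟩ := Multiset.exists_cons_of_mem hj
    rw [Multiset.sum_cons]
    exact Nat.le_add_right _ _
  obtain ⟨Q, h1, h2⟩ := gen_poly (a * k) m hjW
  exact ⟨Q, le_trans h1 hm2, h2.symm⟩
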